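/- There exists a Hamiltonian H̃ : ℝ^N × ℝ^N → ℝ satisfying (A1), (A2), (A3) and superlinear in the momentum: H̃(x,p)/|p| → +∞ as |p| → +∞ for every x, such that the subsolutions of H̃ = 0 are exactly the subsolutions of H = 0 (in particular 0 is the critical value of H̃), and for every λ > 0 the pointwise supremum of the subsolutions of λu + H̃(x,Du) = 0 equals u_λ. -/

import Mathlib

open MeasureTheory Set
open scoped RealInnerProductSpace

noncomputable section

abbrev Euc (N : ℕ) := EuclideanSpace ℝ (Fin N)

/-- `u` is an (a.e.) subsolution of `H = a` in `ℝ^N`. -/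
def IsSubsol {N : ℕ} (H : Euc N × Euc N → ℝ) (a : ℝ) (u : Euc N → ℝ) : Prop :=
  LocallyLipschitz u ∧
    ∀ᵐ x : Euc N ∂volume, DifferentiableAt ℝ u x → H (x, gradient u x) ≤ a

/-- `u` is an (a.e.) subsolution of the discounted equation `λ u + H(x,Du) = 0`. -/
def IsDiscSubsol {N : ℕ} (H : Euc N × Euc N → ℝ) (lam : ℝ) (u : Euc N → ℝ) : Prop :=
  LocallyLipschitz u ∧
    ∀ᵐ x : Euc N ∂volume, DifferentiableAt ℝ u x →
      lam * u x + H (x, gradient u x) ≤ 0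

/-- The Lagrangian associated with `H` via the Fenchel transform. -/
def Lag {N : ℕ} (H : Euc N × Euc N → ℝ) : Euc N × Euc N → ℝ :=
  fun z => sSup (Set.range fun p : Euc N => ⟪p, z.2⟫ - H (z.1, p))

/-- `u` is a subsolution for the generalized Lagrangian `Φ`. -/
def SubsolFor {N : ℕ} (Φ : Euc N × Euc N → ℝ) (u : Euc N → ℝ) : Prop :=
  LocallyLipschitz u ∧
    ∀ᵐ x : Euc N ∂volume, DifferentiableAt ℝ u x →
      ∀ q : Euc N, fderiv ℝ u x q ≤ Φ (x, q)

/-- `u` is a `λ`-discounted subsolution for the generalized Lagrangian `Φ`. -/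
def DiscSubsolFor {N : ℕ} (lam : ℝ) (Φ : Euc N × Euc N → ℝ) (u : Euc N → ℝ) : Prop :=
  LocallyLipschitz u ∧
    ∀ᵐ x : Euc N ∂volume, DifferentiableAt ℝ u x →
      ∀ q : Euc N, lam * u x + fderiv ℝ u x q ≤ Φ (x, q)

/-- A Mather measure for the ergodic problem. -/
def MatherMeasure {N : ℕ} (H : Euc N × Euc N → ℝ) (μ : Measure (Euc N × Euc N)) : Prop :=
  IsProbabilityMeasure μ ∧ Integrable (Lag H) μ ∧ (∫ z, Lag H z ∂μ) = 0 ∧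
    ∀ Φ : Euc N × Euc N → ℝ, Continuous Φ → BddBelow (Set.range Φ) →
      (∃ u, SubsolFor Φ u) → (Integrable Φ μ → 0 ≤ ∫ z, Φ z ∂μ)

/-- A `(λ,z)`-Mather measure (relative to the maximal discounted solution `um`). -/
def DiscMatherMeasure {N : ℕ} (H : Euc N × Euc N → ℝ) (lam : ℝ) (z : Euc N)
    (um : Euc N → ℝ) (μ : Measure (Euc N × Euc N)) : Prop :=
  IsProbabilityMeasure μ ∧ Integrable (Lag H) μ ∧ (∫ w, Lag H w ∂μ) = lam * um z ∧
    ∀ Φ : Euc N × Euc N → ℝ, Continuous Φ → BddBelow (Set.range Φ) →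
      ∀ u : Euc N → ℝ, DiscSubsolFor lam Φ u →
        (Integrable Φ μ → lam * u z ≤ ∫ w, Φ w ∂μ)



/-- Rademacher for locally Lipschitz functions. -/
theorem LocallyLipschitz.ae_diff {N : ℕ} {f : Euc N → ℝ} (hf : LocallyLipschitz f) :
    ∀ᵐ x : Euc N ∂volume, DifferentiableAt ℝ f x := by
  rw [ae_iff]
  apply measure_null_of_locally_null
  intro x hx
  obtain ⟨K, t, ht, hL⟩ := hf x
  refine ⟨{y | ¬ DifferentiableAt ℝ f y} ∩ interior t,
    inter_mem_nhdsWithin _ (interior_mem_nhds.2 ht), ?_⟩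
  have h1 : ∀ᵐ y : Euc N ∂volume, y ∈ t → DifferentiableWithinAt ℝ f t y :=
    hL.ae_differentiableWithinAt_of_mem
  rw [ae_iff] at h1
  refine measure_mono_null ?_ h1
  intro y hy
  simp only [mem_inter_iff, mem_setOf_eq] at hy ⊢
  intro hmem
  exact hy.1 ((hmem (interior_subset hy.2)).differentiableAt
    (mem_interior_iff_mem_nhds.1 hy.2))

/-- cumulative max -/
def cumMax (f : ℕ → ℝ) : ℕ → ℝ
  | 0 => f 0
  | n + 1 => max (cumMax f n) (f (n + 1))

lemma le_cumMax (f : ℕ → ℝ) (n : ℕ) : f n ≤ cumMax f n := by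
  cases n with
  | zero => exact le_rfl
  | succ n => exact le_max_right _ _

lemma cumMax_mono (f : ℕ → ℝ) : Monotone (cumMax f) := by
  apply monotone_nat_of_le_succ
  intro n; exact le_max_left _ _

lemma convexOn_normSq {N : ℕ} : ConvexOn ℝ (Set.univ : Set (Euc N)) (fun p => ‖p‖ ^ 2) := by
  refine ⟨convex_univ, fun x _ y _ a b ha hb hab => ?_⟩
  have h1 : ‖a • x + b • y‖ ≤ a * ‖x‖ + b * ‖y‖ := by
    refine (norm_add_le _ _).trans ?_
    rw [norm_smul, norm_smul, Real.norm_eq_abs, Real.norm_eq_abs, abs_of_nonneg ha,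
      abs_of_nonneg hb]
  have h2 : ‖a • x + b • y‖ ^ 2 ≤ (a * ‖x‖ + b * ‖y‖) ^ 2 :=
    pow_le_pow_left₀ (norm_nonneg _) h1 2
  have hx := norm_nonneg x
  have hy := norm_nonneg y
  simp only [smul_eq_mul]
  nlinarith [sq_nonneg (‖x‖ - ‖y‖), mul_nonneg ha hb]


section PL
open Filter Topology

variable (M : ℕ → ℝ)

/-- affine pieces -/
def Apiece (k : ℕ) (s : ℝ) : ℝ := M (k + 1) + (s - k) * (M (k + 2) - M (k + 1))

/-- the interpolation -/
def Binterp (s : ℝ) : ℝ := Apiece M ⌊s⌋.toNat s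

lemma Apiece_cont (k : ℕ) : Continuous (Apiece M k) := by
  unfold Apiece; fun_prop

lemma Binterp_eq_zero_piece {s : ℝ} (hs : s < 1) : Binterp M s = Apiece M 0 s := by
  have h : ⌊s⌋.toNat = 0 := by
    have : ⌊s⌋ < 1 := by exact_mod_cast Int.floor_lt.2 (by exact_mod_cast hs)
    omega
  unfold Binterp; rw [h]

lemma Binterp_eq_piece {k : ℕ} {s : ℝ} (h1 : (k : ℝ) ≤ s) (h2 : s < k + 1) :
    Binterp M s = Apiece M k s := by
  have h : ⌊s⌋ = (k : ℤ) := by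
    rw [Int.floor_eq_iff]
    exact ⟨by exact_mod_cast h1, by exact_mod_cast h2⟩
  unfold Binterp
  rw [h, Int.toNat_natCast]

lemma Binterp_at_succ (k : ℕ) : Binterp M ((k : ℝ) + 1) = Apiece M k ((k : ℝ) + 1) := by
  have h : Binterp M ((k : ℝ) + 1) = Apiece M (k + 1) ((k : ℝ) + 1) := by
    apply Binterp_eq_piece M (k := k + 1) <;> push_cast <;> linarith
  rw [h]; unfold Apiece; push_cast; ring

lemma Binterp_continuous : Continuous (Binterp M) := by
  rw [continuous_iff_continuousAt]
  intro s₀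
  rcases lt_or_ge s₀ 1 with hs | hs
  · apply ContinuousAt.congr_of_eventuallyEq ((Apiece_cont M 0).continuousAt)
    filter_upwards [Iio_mem_nhds hs] with y hy
    exact Binterp_eq_zero_piece M hy
  · have hk0 : (0:ℝ) ≤ s₀ := le_trans zero_le_one hs
    have hcast : ((⌊s₀⌋.toNat : ℕ) : ℝ) = ((⌊s₀⌋ : ℤ) : ℝ) := by
      have := Int.toNat_of_nonneg (Int.floor_nonneg.2 hk0)
      exact_mod_cast congrArg (fun z : ℤ => (z : ℝ)) this
    set k := ⌊s₀⌋.toNat with hkdef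
    have hkle : (k : ℝ) ≤ s₀ := by rw [hcast]; exact Int.floor_le s₀
    have hlt1 : s₀ < (k : ℝ) + 1 := by rw [hcast]; exact Int.lt_floor_add_one s₀
    have hk1 : 1 ≤ k := by
      have h1 : (1 : ℤ) ≤ ⌊s₀⌋ := by exact_mod_cast Int.le_floor.2 (by exact_mod_cast hs)
      omega
    obtain ⟨j, hj⟩ : ∃ j, k = j + 1 := ⟨k - 1, by omega⟩
    rcases eq_or_lt_of_le hkle with heq | hlt2
    · -- s₀ = k = j + 1
      have hs₀ : s₀ = (j : ℝ) + 1 := by rw [← heq, hj]; push_cast; ring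
      have hL : ContinuousWithinAt (Binterp M) (Iio s₀) s₀ := by
        apply ContinuousWithinAt.congr_of_eventuallyEq
          ((Apiece_cont M j).continuousAt.continuousWithinAt)
        · have hm : Ioi ((j : ℝ)) ∈ 𝓝[Iio s₀] s₀ :=
            mem_nhdsWithin_of_mem_nhds (Ioi_mem_nhds (by rw [hs₀]; linarith))
          filter_upwards [hm, self_mem_nhdsWithin] with y hy1 hy2
          exact Binterp_eq_piece M (le_of_lt hy1) (by rw [← hs₀]; exact hy2)
        · rw [hs₀]; exact Binterp_at_succ M j
      have hR : ContinuousWithinAt (Binterp M) (Ioi s₀) s₀ := by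
        apply ContinuousWithinAt.congr_of_eventuallyEq
          ((Apiece_cont M (j+1)).continuousAt.continuousWithinAt)
        · have hm : Iio (s₀ + 1) ∈ 𝓝[Ioi s₀] s₀ :=
            mem_nhdsWithin_of_mem_nhds (Iio_mem_nhds (by linarith))
          filter_upwards [hm, self_mem_nhdsWithin] with y hy1 hy2
          refine Binterp_eq_piece M ?_ ?_
          · push_cast; rw [← hs₀]; exact le_of_lt hy2
          · push_cast; rw [← hs₀] at *; linarith [mem_Iio.1 hy1]
        · refine Binterp_eq_piece M ?_ ?_ <;> push_cast <;> rw [hs₀] <;> linarith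
      rw [← continuousWithinAt_compl_self, ← Iio_union_Ioi]
      exact hL.union hR
    · apply ContinuousAt.congr_of_eventuallyEq ((Apiece_cont M k).continuousAt)
      have hm : Ioo ((k : ℝ)) ((k : ℝ) + 1) ∈ 𝓝 s₀ := Ioo_mem_nhds hlt2 hlt1
      filter_upwards [hm] with y hy
      exact Binterp_eq_piece M (le_of_lt hy.1) hy.2

end PL

section PL2
open Filter Topology

lemma floor_toNat_le {s : ℝ} (hs : 0 ≤ s) : ((⌊s⌋.toNat : ℕ) : ℝ) ≤ s := by
  have h := Int.toNat_of_nonneg (Int.floor_nonneg.2 hs)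
  have : ((⌊s⌋.toNat : ℕ) : ℝ) = ((⌊s⌋ : ℤ) : ℝ) := by exact_mod_cast congrArg (fun z : ℤ => (z : ℝ)) h
  rw [this]; exact Int.floor_le s

lemma lt_floor_toNat_add_one {s : ℝ} (hs : 0 ≤ s) : s < ((⌊s⌋.toNat : ℕ) : ℝ) + 1 := by
  have h := Int.toNat_of_nonneg (Int.floor_nonneg.2 hs)
  have : ((⌊s⌋.toNat : ℕ) : ℝ) = ((⌊s⌋ : ℤ) : ℝ) := by exact_mod_cast congrArg (fun z : ℤ => (z : ℝ)) h
  rw [this]; exact Int.lt_floor_add_one s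

lemma Binterp_lower (M : ℕ → ℝ) (hM : Monotone M) {s : ℝ} (hs : 0 ≤ s) :
    M ⌊s⌋.toNat ≤ Binterp M s := by
  unfold Binterp Apiece
  have h1 := floor_toNat_le hs
  have h2 : M ⌊s⌋.toNat ≤ M (⌊s⌋.toNat + 1) := hM (by omega)
  have h3 : M (⌊s⌋.toNat + 1) ≤ M (⌊s⌋.toNat + 2) := hM (by omega)
  nlinarith [mul_nonneg (by linarith : (0:ℝ) ≤ s - (⌊s⌋.toNat : ℝ)) (by linarith : (0:ℝ) ≤ M (⌊s⌋.toNat + 2) - M (⌊s⌋.toNat + 1))]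

lemma Binterp_upper (M : ℕ → ℝ) (hM : Monotone M) {s : ℝ} (hs : 0 ≤ s) :
    Binterp M s ≤ M (⌊s⌋.toNat + 2) := by
  unfold Binterp Apiece
  have h1 := lt_floor_toNat_add_one hs
  have h3 : M (⌊s⌋.toNat + 1) ≤ M (⌊s⌋.toNat + 2) := hM (by omega)
  nlinarith [mul_le_of_le_one_left (by linarith : (0:ℝ) ≤ M (⌊s⌋.toNat + 2) - M (⌊s⌋.toNat + 1)) (by linarith : s - ((⌊s⌋.toNat : ℕ) : ℝ) ≤ 1)]

end PL2

section helpers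
open Filter Topology

lemma locallyLipschitz_max_const {N : ℕ} {f : Euc N → ℝ} (hf : LocallyLipschitz f) (k : ℝ) :
    LocallyLipschitz (fun y => max (f y) k) := by
  intro x
  obtain ⟨K, t, ht, hL⟩ := hf x
  refine ⟨K, t, ht, LipschitzOnWith.of_dist_le_mul fun y hy z hz => ?_⟩
  calc dist (max (f y) k) (max (f z) k) ≤ dist (f y) (f z) := by
        rw [Real.dist_eq, Real.dist_eq]; exact abs_max_sub_max_le_abs _ _ _
    _ ≤ K * dist y z := hL.dist_le_mul y hy z hz

lemma gradient_eq_of_fderiv_eq {N : ℕ} {u v : Euc N → ℝ} {x : Euc N}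
    (h : fderiv ℝ u x = fderiv ℝ v x) : gradient u x = gradient v x := by
  simp only [gradient, h]

lemma gradient_zero_of_fderiv_zero {N : ℕ} {u : Euc N → ℝ} {x : Euc N}
    (h : fderiv ℝ u x = 0) : gradient u x = 0 := by
  simp [gradient, h]

end helpers

theorem stmt5 {N : ℕ} (hN : 1 ≤ N) (H : Euc N × Euc N → ℝ)
    (hA1 : Continuous H)
    (hA2conv : ∀ x : Euc N, ConvexOn ℝ Set.univ fun p => H (x, p))
    (hA2coer : ∀ R : ℝ, 0 < R → ∀ C : ℝ, ∃ r : ℝ, ∀ x p : Euc N,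
      ‖x‖ ≤ R → r ≤ ‖p‖ → C ≤ H (x, p))
    (hA3 : ∃ ε > (0 : ℝ), ∃ m : ℝ,
      (∃ R : ℝ, ∀ x : Euc N, R ≤ ‖x‖ → ∀ p : Euc N, ‖p‖ ≤ ε → H (x, p) ≤ m) ∧
      (∃ x₀ : Euc N, ∀ p : Euc N, m < H (x₀, p)))
    (hcrit : sInf {a : ℝ | ∃ u : Euc N → ℝ, IsSubsol H a u} = 0)
    (um : ℝ → Euc N → ℝ)
    (hum : ∀ lam : ℝ, 0 < lam → ∀ x : Euc N,
      um lam x = sSup {r : ℝ | ∃ v : Euc N → ℝ, IsDiscSubsol H lam v ∧ v x = r})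
 :
    ∃ H' : Euc N × Euc N → ℝ,
      Continuous H' ∧
      (∀ x : Euc N, ConvexOn ℝ Set.univ fun p => H' (x, p)) ∧
      (∀ R : ℝ, 0 < R → ∀ C : ℝ, ∃ r : ℝ, ∀ x p : Euc N,
        ‖x‖ ≤ R → r ≤ ‖p‖ → C ≤ H' (x, p)) ∧
      (∃ ε > (0 : ℝ), ∃ m : ℝ,
        (∃ R : ℝ, ∀ x : Euc N, R ≤ ‖x‖ → ∀ p : Euc N, ‖p‖ ≤ ε → H' (x, p) ≤ m) ∧
        (∃ x₀ : Euc N, ∀ p : Euc N, m < H' (x₀, p))) ∧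
      (∀ x : Euc N, ∀ C : ℝ, ∃ r : ℝ, ∀ p : Euc N, r ≤ ‖p‖ → C * ‖p‖ ≤ H' (x, p)) ∧
      (∀ u : Euc N → ℝ, IsSubsol H' 0 u ↔ IsSubsol H 0 u) ∧
      sInf {a : ℝ | ∃ u : Euc N → ℝ, IsSubsol H' a u} = 0 ∧
      (∀ lam : ℝ, 0 < lam → ∀ x : Euc N,
        sSup {r : ℝ | ∃ v : Euc N → ℝ, IsDiscSubsol H' lam v ∧ v x = r} = um lam x) := by
  obtain ⟨ε, hε, m, ⟨R₀, hR₀⟩, x₀, hx₀⟩ := hA3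
  -- global upper bound for H (x, 0)
  obtain ⟨C₀', hC₀'⟩ : ∃ C₀' : ℝ, ∀ x : Euc N, ‖x‖ ≤ max R₀ 0 → H (x, 0) ≤ C₀' := by
    have hcomp : IsCompact ((fun x : Euc N => H (x, 0)) '' Metric.closedBall 0 (max R₀ 0)) :=
      (isCompact_closedBall _ _).image (hA1.comp (continuous_id.prodMk continuous_const))
    obtain ⟨C₀', hC₀'⟩ := hcomp.bddAbove
    exact ⟨C₀', fun x hx => hC₀' (mem_image_of_mem _ (by
      simpa [Metric.mem_closedBall, dist_zero_right] using hx))⟩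
  set C₁ : ℝ := max (max C₀' m) 0 + 1 with hC₁def
  have hC₁1 : 1 ≤ C₁ := by simp only [hC₁def]; nlinarith [le_max_right (max C₀' m) (0:ℝ)]
  have hH0 : ∀ x : Euc N, H (x, 0) ≤ C₁ - 1 := by
    intro x
    rcases le_total ‖x‖ (max R₀ 0) with h | h
    · have := hC₀' x h
      simp only [hC₁def]; nlinarith [le_max_left C₀' m, le_max_left (max C₀' m) (0:ℝ)]
    · have := hR₀ x (le_trans (le_max_left R₀ 0) h) 0 (by simp [le_of_lt hε])
      simp only [hC₁def]; nlinarith [le_max_right C₀' m, le_max_left (max C₀' m) (0:ℝ)]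
  -- coercivity radii
  choose r hr using fun n : ℕ => hA2coer ((n : ℝ) + 1) (by positivity) (C₁ + 1)
  -- lower bounds on compact boxes
  have hbdd : ∀ n : ℕ, ∃ bl : ℝ, ∀ z : Euc N × Euc N,
      ‖z.1‖ ≤ (n : ℝ) + 1 → ‖z.2‖ ≤ max (r n) 0 → bl ≤ H z := by
    intro n
    have hK : IsCompact (Metric.closedBall (0 : Euc N) ((n : ℝ) + 1) ×ˢ
        Metric.closedBall (0 : Euc N) (max (r n) 0)) :=
      (isCompact_closedBall _ _).prod (isCompact_closedBall _ _)
    obtain ⟨bl, hbl⟩ := (hK.bddBelow_image hA1.continuousOn)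
    refine ⟨bl, fun z h1 h2 => hbl (mem_image_of_mem _ ?_)⟩
    rw [Set.mem_prod]
    constructor <;> rw [Metric.mem_closedBall, dist_zero_right] <;> assumption
  choose b hb using hbdd
  set Kg : ℝ := ε ^ 2 + |m| + 1 with hKgdef
  have hKg1 : 1 ≤ Kg := by simp only [hKgdef]; nlinarith [sq_nonneg ε, abs_nonneg m]
  set q : ℕ → ℝ := fun n => (max (r n) 0) ^ 2 + max 0 (-(b n)) + Kg with hqdef
  have hqKg : ∀ n, Kg ≤ q n := fun n => by
    simp only [hqdef]; nlinarith [sq_nonneg (max (r n) 0), le_max_left (0:ℝ) (-(b n))]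
  set M : ℕ → ℝ := cumMax q with hMdef
  have hMmono : Monotone M := cumMax_mono q
  have hMq : ∀ n, q n ≤ M n := le_cumMax q
  have hMKg : ∀ n, Kg ≤ M n := fun n =>
    le_trans (hqKg 0) (le_trans (hMq 0) (hMmono (Nat.zero_le n)))
  set g : Euc N → ℝ := fun x => Binterp M ‖x‖ with hgdef
  have hgcont : Continuous g := (Binterp_continuous M).comp continuous_norm
  have hgM : ∀ x : Euc N, M ⌊‖x‖⌋.toNat ≤ g x :=
    fun x => Binterp_lower M hMmono (norm_nonneg x)
  have hgKg : ∀ x : Euc N, Kg ≤ g x := fun x => le_trans (hMKg _) (hgM x)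
  have hg1 : ∀ x : Euc N, 1 ≤ g x := fun x => le_trans hKg1 (hgKg x)
  -- the key sublevel estimate
  have hL2 : ∀ x p : Euc N, H (x, p) ≤ C₁ → ‖p‖ ^ 2 - g x ≤ H (x, p) := by
    intro x p hH
    have hxn : ‖x‖ ≤ (⌊‖x‖⌋.toNat : ℝ) + 1 := le_of_lt (lt_floor_toNat_add_one (norm_nonneg x))
    have hpr : ‖p‖ < r ⌊‖x‖⌋.toNat := by
      by_contra h
      push_neg at h
      exact absurd (hr ⌊‖x‖⌋.toNat x p hxn h) (by linarith)
    have hpρ : ‖p‖ ≤ max (r ⌊‖x‖⌋.toNat) 0 := le_trans (le_of_lt hpr) (le_max_left _ _)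
    have hbn : b ⌊‖x‖⌋.toNat ≤ H (x, p) := hb ⌊‖x‖⌋.toNat (x, p) hxn hpρ
    have hsq : ‖p‖ ^ 2 ≤ (max (r ⌊‖x‖⌋.toNat) 0) ^ 2 := by
      apply pow_le_pow_left₀ (norm_nonneg p) hpρ
    have hgq : q ⌊‖x‖⌋.toNat ≤ g x := le_trans (hMq _) (hgM x)
    have hmb : -(b ⌊‖x‖⌋.toNat) ≤ max 0 (-(b ⌊‖x‖⌋.toNat)) := le_max_right _ _
    simp only [hqdef] at hgq
    linarith [le_trans zero_le_one hKg1]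
  -- the modified Hamiltonian
  set H' : Euc N × Euc N → ℝ := fun z => max (H z) (‖z.2‖ ^ 2 - g z.1) with hH'def
  have hH'le : ∀ z : Euc N × Euc N, H z ≤ H' z := fun z => le_max_left _ _
  refine ⟨H', ?_, ?_, ?_, ?_, ?_, ?_, ?_, ?_⟩
  · -- continuity
    exact hA1.max (((continuous_norm.comp continuous_snd).pow 2).sub (hgcont.comp continuous_fst))
  · -- convexity in p
    intro x
    have h1 : ConvexOn ℝ (Set.univ : Set (Euc N)) (fun p => ‖p‖ ^ 2 - g x) := by
      exact convexOn_normSq.sub (concaveOn_const (g x) convex_univ)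
    simpa [Pi.sup_def] using (hA2conv x).sup h1
  · -- coercivity
    intro R hR C
    refine ⟨Real.sqrt (max 0 (C + M (⌊R⌋.toNat + 2))), fun x p hx hp => ?_⟩
    have hgR : g x ≤ M (⌊R⌋.toNat + 2) := by
      refine le_trans (Binterp_upper M hMmono (norm_nonneg x)) (hMmono ?_)
      have := Int.floor_le_floor (le_trans hx (le_of_eq rfl))
      omega
    have hsq : max 0 (C + M (⌊R⌋.toNat + 2)) ≤ ‖p‖ ^ 2 := by
      rw [← Real.sq_sqrt (le_max_left 0 (C + M (⌊R⌋.toNat + 2)))]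
      exact pow_le_pow_left₀ (Real.sqrt_nonneg _) hp 2
    have h1 : C + M (⌊R⌋.toNat + 2) ≤ ‖p‖ ^ 2 := le_trans (le_max_right _ _) hsq
    refine le_trans ?_ (le_max_right (H (x, p)) _)
    simp only
    linarith
  · -- (A3)
    refine ⟨ε, hε, m, ⟨R₀, fun x hx p hp => ?_⟩, x₀, fun p => lt_of_lt_of_le (hx₀ p) (hH'le _)⟩
    have h1 : H (x, p) ≤ m := hR₀ x hx p hp
    have h2 : ‖p‖ ^ 2 - g x ≤ m := by
      have hsq : ‖p‖ ^ 2 ≤ ε ^ 2 := pow_le_pow_left₀ (norm_nonneg p) hp 2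
      have := hgKg x
      simp only [hKgdef] at this
      nlinarith [neg_abs_le m]
    exact max_le h1 h2
  · -- superlinearity
    intro x C
    refine ⟨g x + |C| + 1, fun p hp => ?_⟩
    refine le_trans ?_ (le_max_right (H (x, p)) _)
    simp only
    have habs : C * ‖p‖ ≤ |C| * ‖p‖ := mul_le_mul_of_nonneg_right (le_abs_self C) (norm_nonneg p)
    have hg1x := hg1 x
    have habsC := abs_nonneg C
    have key : (g x + 1) * 1 ≤ (‖p‖ - |C|) * ‖p‖ :=
      mul_le_mul (by linarith) (by linarith) one_pos.le (by linarith)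
    nlinarith
  · -- same subsolutions at level 0
    intro u
    constructor
    · rintro ⟨hl, hae⟩
      exact ⟨hl, hae.mono fun x hx hd => le_trans (hH'le _) (hx hd)⟩
    · rintro ⟨hl, hae⟩
      refine ⟨hl, hae.mono fun x hx hd => ?_⟩
      have h1 := hx hd
      simp only [hH'def]
      exact max_le h1 (le_trans (hL2 x _ (le_trans h1 (by linarith))) h1)
  · -- critical value
    have hsub : {a : ℝ | ∃ u, IsSubsol H' a u} ⊆ {a | ∃ u, IsSubsol H a u} := by
      rintro a ⟨u, hl, hae⟩
      exact ⟨u, hl, hae.mono fun x hx hd => le_trans (hH'le _) (hx hd)⟩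
    have hof : ∀ a : ℝ, a ∈ {a : ℝ | ∃ u, IsSubsol H a u} → a ≤ C₁ →
        a ∈ {a : ℝ | ∃ u, IsSubsol H' a u} := by
      rintro a ⟨u, hl, hae⟩ haC
      refine ⟨u, hl, hae.mono fun x hx hd => ?_⟩
      have h1 := hx hd
      simp only [hH'def]
      exact max_le h1 (le_trans (hL2 x _ (le_trans h1 haC)) h1)
    by_cases hne : {a : ℝ | ∃ u, IsSubsol H a u}.Nonempty
    · by_cases hbd : BddBelow {a : ℝ | ∃ u, IsSubsol H a u}
      · have h0le : ∀ a ∈ {a : ℝ | ∃ u, IsSubsol H a u}, (0:ℝ) ≤ a := fun a ha =>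
          hcrit ▸ csInf_le hbd ha
        have hex : ∀ δ : ℝ, 0 < δ → ∃ a ∈ {a : ℝ | ∃ u, IsSubsol H' a u}, a < δ ∧ 0 ≤ a := by
          intro δ hδ
          obtain ⟨a, ha, halt⟩ := exists_lt_of_csInf_lt hne
            (show sInf {a : ℝ | ∃ u, IsSubsol H a u} < min δ 1 by
              rw [hcrit]; exact lt_min hδ one_pos)
          exact ⟨a, hof a ha (le_trans (le_of_lt halt) (le_trans (min_le_right δ 1) hC₁1)),
            lt_of_lt_of_le halt (min_le_left _ _), h0le a ha⟩
        obtain ⟨a₁, ha₁, _, _⟩ := hex 1 one_pos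
        have hbd' : BddBelow {a : ℝ | ∃ u, IsSubsol H' a u} := hbd.mono hsub
        apply le_antisymm
        · refine le_of_forall_pos_le_add fun δ hδ => ?_
          obtain ⟨a, ha, hlt, _⟩ := hex δ hδ
          have := csInf_le hbd' ha
          linarith
        · exact le_csInf ⟨a₁, ha₁⟩ fun b hb => h0le b (hsub hb)
      · have hnbd' : ¬ BddBelow {a : ℝ | ∃ u, IsSubsol H' a u} := by
          rintro ⟨c, hc⟩
          apply hbd
          refine ⟨min c C₁, fun a ha => ?_⟩
          rcases le_total a C₁ with h | h
          · exact le_trans (min_le_left _ _) (hc (hof a ha h))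
          · exact le_trans (min_le_right _ _) h
        rw [Real.sInf_of_not_bddBelow hnbd']
    · rw [not_nonempty_iff_eq_empty] at hne
      have h' : {a : ℝ | ∃ u, IsSubsol H' a u} = ∅ := by
        rw [← subset_empty_iff, ← hne]; exact hsub
      rw [h', Real.sInf_empty]
  · -- discounted suprema
    intro lam hlam x
    rw [hum lam hlam x]
    set k : ℝ := -C₁ / lam with hkdef
    have hlamne : lam ≠ 0 := ne_of_gt hlam
    have hlk : lam * k = -C₁ := by rw [hkdef]; field_simp
    have hkH' : IsDiscSubsol H' lam (fun _ => k) := by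
      refine ⟨LocallyLipschitz.const k, Filter.Eventually.of_forall fun y hd => ?_⟩
      have hgr : gradient (fun _ : Euc N => k) y = (0 : Euc N) := gradient_const y k
      simp only [hgr, hH'def]
      have h2 : ‖(0 : Euc N)‖ ^ 2 - g y ≤ C₁ - 1 := by
        rw [norm_zero]; nlinarith [hg1 y]
      have := max_le (hH0 y) h2
      linarith
    have hmax : ∀ v : Euc N → ℝ, IsDiscSubsol H lam v →
        IsDiscSubsol H' lam (fun y => max (v y) k) := by
      intro v hv
      refine ⟨locallyLipschitz_max_const hv.1 k, ?_⟩
      filter_upwards [hv.2, hv.1.ae_diff] with y hy hdy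
      intro hdw
      rcases le_or_gt k (v y) with hky | hky
      · have hwy : max (v y) k = v y := max_eq_left hky
        have hfd : fderiv ℝ (fun z => max (v z) k) y = fderiv ℝ v y := by
          have hmin : IsLocalMin (fun z => max (v z) k - v z) y := by
            refine Filter.Eventually.of_forall fun z => ?_
            simp only
            rw [hwy, sub_self]
            exact sub_nonneg.2 (le_max_left _ _)
          have h0 := hmin.fderiv_eq_zero
          rw [fderiv_fun_sub hdw hdy] at h0
          exact sub_eq_zero.1 h0
        have hgrad := gradient_eq_of_fderiv_eq hfd
        simp only [hgrad, hwy, hH'def]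
        have hyv := hy hdy
        have hHle : H (y, gradient v y) ≤ C₁ := by
          have h3 : lam * k ≤ lam * v y := mul_le_mul_of_nonneg_left hky (le_of_lt hlam)
          linarith
        have hψ := hL2 y (gradient v y) hHle
        have h3 : lam * k ≤ lam * v y := mul_le_mul_of_nonneg_left hky (le_of_lt hlam)
        have := max_le (show H (y, gradient v y) ≤ -(lam * v y) by linarith)
          (show ‖gradient v y‖ ^ 2 - g y ≤ -(lam * v y) by linarith)
        linarith
      · have hev : (fun z => max (v z) k) =ᶠ[nhds y] fun _ => k := by
          have hopen : {z | v z < k} ∈ nhds y :=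
            (isOpen_lt hv.1.continuous continuous_const).mem_nhds hky
          filter_upwards [hopen] with z hz
          exact max_eq_right (le_of_lt hz)
        have hfd : fderiv ℝ (fun z => max (v z) k) y = 0 := by
          rw [hev.fderiv_eq]; exact fderiv_const_apply k
        have hgrad := gradient_zero_of_fderiv_zero hfd
        simp only [hgrad, hH'def, max_eq_right (le_of_lt hky)]
        have h2 : ‖(0 : Euc N)‖ ^ 2 - g y ≤ C₁ - 1 := by
          rw [norm_zero]; nlinarith [hg1 y]
        have := max_le (hH0 y) h2
        linarith
    set S := {r : ℝ | ∃ v, IsDiscSubsol H lam v ∧ v x = r} with hS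
    set S' := {r : ℝ | ∃ v, IsDiscSubsol H' lam v ∧ v x = r} with hS'
    have hS'S : S' ⊆ S := by
      rintro ρ ⟨v, hv, rfl⟩
      exact ⟨v, ⟨hv.1, hv.2.mono fun y hy hd =>
        le_trans (add_le_add_right (hH'le _) _) (hy hd)⟩, rfl⟩
    have hdom : ∀ ρ ∈ S, ∃ ρ' ∈ S', ρ ≤ ρ' := by
      rintro ρ ⟨v, hv, rfl⟩
      exact ⟨max (v x) k, ⟨_, hmax v hv, rfl⟩, le_max_left _ _⟩
    have hkS' : k ∈ S' := ⟨fun _ => k, hkH', rfl⟩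
    by_cases hbd : BddAbove S
    · have hbd' : BddAbove S' := hbd.mono hS'S
      apply le_antisymm
      · exact csSup_le ⟨k, hkS'⟩ fun ρ hρ => le_csSup hbd (hS'S hρ)
      · refine csSup_le ⟨k, hS'S hkS'⟩ fun ρ hρ => ?_
        obtain ⟨ρ', hρ', hle⟩ := hdom ρ hρ
        exact le_trans hle (le_csSup hbd' hρ')
    · have hnbd' : ¬ BddAbove S' := by
        rintro ⟨c, hc⟩
        apply hbd
        refine ⟨c, fun ρ hρ => ?_⟩
        obtain ⟨ρ', hρ', hle⟩ := hdom ρ hρ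
        exact le_trans hle (hc hρ')
      rw [Real.sSup_of_not_bddAbove hbd, Real.sSup_of_not_bddAbove hnbd']

end
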